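/- In the setting of the previous statement (K ⊆ ℝ^p nonempty compact, R continuous, J lower semicontinuous and bounded, λ ≥ 0, finite coordinate set I with weights γᵢ > 0, f concave with f(0) = 0 and f(y) → 1 as y → +∞, Φ_σ and Φ₀ defined as there, σ_k positive strictly decreasing to 0): (a) for every k the set argmin_{ℝ^p} Φ_{σ_k} is nonempty; and (b) for every sequence ε_k ≥ 0 with ε_k → 0 and every sequence x_k ∈ ℝ^p with Φ_{σ_k}(x_k) ≤ inf Φ_{σ_k} + ε_k, the sequence (x_k) lies in the compact set K (hence is bounded) and every cluster point x̄ of (x_k) satisfies Φ₀(x̄) = inf_{ℝ^p} Φ₀, i.e., x̄ ∈ argmin Φ₀. -/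

import Mathlib

open scoped Classical

open Filter

/-- A concave function on `ℝ` with a finite limit at `+∞` is monotone. -/
lemma aux_concave_monotone {f : ℝ → ℝ} (hf : ConcaveOn ℝ Set.univ f)
    (hflim : Tendsto f atTop (nhds 1)) : Monotone f := by
  intro a b hab
  by_contra hlt
  push_neg at hlt
  have hab' : a < b := lt_of_le_of_ne hab (by rintro rfl; exact absurd le_rfl hlt.not_ge)
  have hba : (0:ℝ) < b - a := by linarith
  set d := (f b - f a) / (b - a) with hd
  have hdneg : d < 0 := div_neg_of_neg_of_pos (by linarith) hba
  have hbound : ∀ c, b < c → f c ≤ f b + d * (c - b) := by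
    intro c hbc
    have hcb : (0:ℝ) < c - b := by linarith
    have hsl := hf.slope_anti_adjacent (Set.mem_univ a) (Set.mem_univ c) hab' hbc
    rw [← hd] at hsl
    have := (div_le_iff₀ hcb).1 hsl
    linarith
  have htop : Tendsto (fun c : ℝ => f b + d * (c - b)) atTop atBot := by
    apply tendsto_atBot_add_const_left
    exact (tendsto_const_mul_atBot_of_neg hdneg).2
      (tendsto_atTop_add_const_right _ _ tendsto_id)
  have hfb : Tendsto f atTop atBot :=
    tendsto_atBot_mono' atTop
      (eventually_atTop.2 ⟨b + 1, fun c hc => hbound c (by linarith)⟩) htop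
  exact not_tendsto_nhds_of_tendsto_atBot hfb 1 hflim

/-- A lower semicontinuous real function attains its minimum on a nonempty compact set. -/
lemma aux_lsc_exists_min {X : Type*} [TopologicalSpace X] {K : Set X} (hKc : IsCompact K)
    (hKne : K.Nonempty) {g : X → ℝ} (hg : LowerSemicontinuous g) :
    ∃ x ∈ K, ∀ y ∈ K, g x ≤ g y := by
  have hne : Nonempty K := hKne.to_subtype
  have hmain := hKc.inter_iInter_nonempty (fun y : K => {z | g z ≤ g y.1})
    (fun y => hg.isClosed_preimage (g y.1))
    (by
      intro u
      rcases u.eq_empty_or_nonempty with rfl | hu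
      · simpa using hKne
      · obtain ⟨y, hyu, hymin⟩ := u.exists_min_image (fun y => g y.1) hu
        refine ⟨y.1, y.2, ?_⟩
        simp only [Set.mem_iInter]
        intro z hz
        exact hymin z hz)
  obtain ⟨x, hxK, hx⟩ := hmain
  refine ⟨x, hxK, fun y hy => ?_⟩
  simpa using Set.mem_iInter.1 hx ⟨y, hy⟩

/-- Parts 2 and 3 of Theorem 4.1: (a) each smoothed problem `Φ_{σ_k}` has a minimizer; and
(b) every sequence of `ε_k`-approximate minimizers of `Φ_{σ_k}` lies in the compact set `K`
and all of its cluster points minimize the ℓ₀-penalized objective `Φ₀`. -/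
theorem approx_minimizers_cluster_to_l0_minimizers (p : ℕ)
    (K : Set (Fin p → ℝ)) (hKne : K.Nonempty) (hKc : IsCompact K)
    (R J : (Fin p → ℝ) → ℝ) (hR : Continuous R)
    (hJ : LowerSemicontinuous J) (hJb : ∃ M : ℝ, ∀ x, |J x| ≤ M)
    (lam : ℝ) (hlam : 0 ≤ lam)
    (I : Finset (Fin p)) (γ : Fin p → ℝ) (hγ : ∀ i ∈ I, 0 < γ i)
    (f : ℝ → ℝ) (hf : ConcaveOn ℝ Set.univ f) (hf0 : f 0 = 0)
    (hflim : Tendsto f atTop (nhds 1))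
    (σ : ℕ → ℝ) (hσpos : ∀ k, 0 < σ k) (hσanti : StrictAnti σ)
    (hσlim : Tendsto σ atTop (nhds 0))
    (Φ : ℕ → (Fin p → ℝ) → EReal)
    (hΦ : ∀ k x, Φ k x = if x ∈ K then
      (((R x + lam * J x + ∑ i ∈ I, γ i * f (|x i| / σ k)) : ℝ) : EReal) else ⊤)
    (Φ₀ : (Fin p → ℝ) → EReal)
    (hΦ₀ : ∀ x, Φ₀ x = if x ∈ K then
      (((R x + lam * J x + ∑ i ∈ I, γ i * (if x i ≠ 0 then (1 : ℝ) else 0)) : ℝ) : EReal)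
      else ⊤) :
    (∀ k : ℕ, ∃ x : Fin p → ℝ, ∀ y : Fin p → ℝ, Φ k x ≤ Φ k y) ∧
    (∀ ε : ℕ → ℝ, (∀ k, 0 ≤ ε k) → Tendsto ε atTop (nhds 0) →
      ∀ x : ℕ → (Fin p → ℝ),
        (∀ k, Φ k (x k) ≤ (⨅ y, Φ k y) + ((ε k : ℝ) : EReal)) →
        (∀ k, x k ∈ K) ∧
        (∀ xbar : Fin p → ℝ, MapClusterPt xbar atTop x → Φ₀ xbar = ⨅ y, Φ₀ y)) := by
  -- basic properties of f
  have hfc : Continuous f := by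
    have h := hf.continuousOn_interior
    rw [interior_univ] at h
    exact continuousOn_univ.1 h
  have hmono : Monotone f := aux_concave_monotone hf hflim
  have hf_le_one : ∀ y : ℝ, f y ≤ 1 := fun y =>
    ge_of_tendsto hflim (eventually_atTop.2 ⟨y, fun z hz => hmono hz⟩)
  have hγ' : ∀ i ∈ I, (0:ℝ) ≤ γ i := fun i hi => (hγ i hi).le
  -- real-valued objectives
  obtain ⟨g, hgdef⟩ : ∃ g : ℕ → (Fin p → ℝ) → ℝ, ∀ k z,
      g k z = R z + lam * J z + ∑ i ∈ I, γ i * f (|z i| / σ k) :=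
    ⟨fun k z => R z + lam * J z + ∑ i ∈ I, γ i * f (|z i| / σ k), fun _ _ => rfl⟩
  obtain ⟨g0, hg0def⟩ : ∃ g0 : (Fin p → ℝ) → ℝ, ∀ z,
      g0 z = R z + lam * J z + ∑ i ∈ I, γ i * (if z i ≠ 0 then (1:ℝ) else 0) :=
    ⟨fun z => R z + lam * J z + ∑ i ∈ I, γ i * (if z i ≠ 0 then (1:ℝ) else 0), fun _ => rfl⟩
  have hΦ' : ∀ k z, Φ k z = if z ∈ K then ((g k z : ℝ) : EReal) else ⊤ := by
    intro k z; rw [hΦ, hgdef]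
  have hΦ₀' : ∀ z, Φ₀ z = if z ∈ K then ((g0 z : ℝ) : EReal) else ⊤ := by
    intro z; rw [hΦ₀, hg0def]
  -- lower semicontinuity of g k
  have hglsc : ∀ k, LowerSemicontinuous (g k) := by
    intro k
    have h1 : LowerSemicontinuous (fun z : Fin p → ℝ => lam * J z) :=
      Continuous.comp_lowerSemicontinuous (continuous_const.mul continuous_id) hJ
        (fun a b hab => mul_le_mul_of_nonneg_left hab hlam)
    have h2 : Continuous (fun z : Fin p → ℝ =>
        R z + ∑ i ∈ I, γ i * f (|z i| / σ k)) := by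
      refine hR.add (continuous_finset_sum _ fun i _ => ?_)
      exact continuous_const.mul
        (hfc.comp ((continuous_abs.comp (continuous_apply i)).div_const _))
    have h3 := h1.add h2.lowerSemicontinuous
    have he : g k = fun z => lam * J z + (R z + ∑ i ∈ I, γ i * f (|z i| / σ k)) := by
      funext z; rw [hgdef k z]; ring
    rw [he]; exact h3
  -- g k ≤ g0 pointwise
  have hg_le_g0 : ∀ k z, g k z ≤ g0 z := by
    intro k z
    have hsum : ∑ i ∈ I, γ i * f (|z i| / σ k)
        ≤ ∑ i ∈ I, γ i * (if z i ≠ 0 then (1:ℝ) else 0) := by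
      refine Finset.sum_le_sum fun i hi => mul_le_mul_of_nonneg_left ?_ (hγ' i hi)
      by_cases h : z i = 0
      · simp [h, hf0]
      · rw [if_pos h]; exact hf_le_one _
    rw [hgdef, hg0def]
    exact add_le_add_right hsum _
  -- monotonicity in k
  have hgmono : ∀ m k, m ≤ k → ∀ z, g m z ≤ g k z := by
    intro m k hmk z
    have hsum : ∑ i ∈ I, γ i * f (|z i| / σ m)
        ≤ ∑ i ∈ I, γ i * f (|z i| / σ k) := by
      refine Finset.sum_le_sum fun i hi => mul_le_mul_of_nonneg_left ?_ (hγ' i hi)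
      exact hmono (div_le_div_of_nonneg_left (abs_nonneg _) (hσpos k) (hσanti.antitone hmk))
    rw [hgdef m z, hgdef k z]
    exact add_le_add_right hsum _
  refine ⟨?_, ?_⟩
  · -- part (a): existence of minimizers
    intro k
    obtain ⟨x0, hx0K, hx0⟩ := aux_lsc_exists_min hKc hKne (hglsc k)
    refine ⟨x0, fun y => ?_⟩
    rw [hΦ' k x0, hΦ' k y, if_pos hx0K]
    by_cases hy : y ∈ K
    · rw [if_pos hy]; exact_mod_cast hx0 y hy
    · rw [if_neg hy]; exact le_top
  · -- part (b)
    intro ε hεnn hεlim x hx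
    obtain ⟨y₀, hy₀⟩ := hKne
    -- approximate minimizers lie in K
    have hxK : ∀ k, x k ∈ K := by
      intro k
      by_contra hk
      have h1 : Φ k (x k) = ⊤ := by rw [hΦ']; exact if_neg hk
      have h2 : (⨅ y, Φ k y) ≤ ((g k y₀ : ℝ) : EReal) := by
        refine le_trans (iInf_le _ y₀) ?_
        rw [hΦ', if_pos hy₀]
      have h3 : (⊤ : EReal) ≤ ((g k y₀ + ε k : ℝ) : EReal) := by
        calc (⊤ : EReal) = Φ k (x k) := h1.symm
          _ ≤ (⨅ y, Φ k y) + ((ε k : ℝ) : EReal) := hx k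
          _ ≤ ((g k y₀ : ℝ) : EReal) + ((ε k : ℝ) : EReal) := add_le_add_left h2 _
          _ = ((g k y₀ + ε k : ℝ) : EReal) := (EReal.coe_add _ _).symm
      exact EReal.coe_ne_top _ (top_le_iff.1 h3)
    refine ⟨hxK, ?_⟩
    intro xbar hcl
    -- key real inequality
    have key : ∀ k, ∀ y ∈ K, g k (x k) ≤ g0 y + ε k := by
      intro k y hy
      have h1 : Φ k (x k) = ((g k (x k) : ℝ) : EReal) := by
        rw [hΦ', if_pos (hxK k)]
      have h2 : (⨅ z, Φ k z) ≤ ((g0 y : ℝ) : EReal) := by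
        refine le_trans (iInf_le _ y) ?_
        rw [hΦ', if_pos hy]
        exact_mod_cast hg_le_g0 k y
      have h3 : ((g k (x k) : ℝ) : EReal) ≤ ((g0 y + ε k : ℝ) : EReal) := by
        calc ((g k (x k) : ℝ) : EReal) = Φ k (x k) := h1.symm
          _ ≤ (⨅ z, Φ k z) + ((ε k : ℝ) : EReal) := hx k
          _ ≤ ((g0 y : ℝ) : EReal) + ((ε k : ℝ) : EReal) := add_le_add_left h2 _
          _ = ((g0 y + ε k : ℝ) : EReal) := (EReal.coe_add _ _).symm
      exact_mod_cast h3
    -- extract a convergent subsequence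
    obtain ⟨ψ, hψ, hψt⟩ := TopologicalSpace.FirstCountableTopology.tendsto_subseq hcl
    have hxbarK : xbar ∈ K :=
      hKc.isClosed.mem_of_tendsto hψt (Eventually.of_forall fun j => hxK (ψ j))
    -- for every m, g m xbar ≤ g0 y for all y ∈ K
    have step : ∀ m, ∀ y ∈ K, g m xbar ≤ g0 y := by
      intro m y hy
      by_contra hlt
      push_neg at hlt
      obtain ⟨δ, hδpos, hδlt⟩ : ∃ δ : ℝ, 0 < δ ∧ g0 y + δ < g m xbar :=
        ⟨(g m xbar - g0 y) / 2, by linarith, by linarith⟩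
      have hev1 : ∀ᶠ j in atTop, g0 y + δ < g m (x (ψ j)) :=
        hψt.eventually (hglsc m xbar (g0 y + δ) hδlt)
      have hev2 : ∀ᶠ j in atTop, ε (ψ j) < δ :=
        (hεlim.comp hψ.tendsto_atTop).eventually_lt_const hδpos
      have hev3 : ∀ᶠ j in atTop, m ≤ ψ j :=
        hψ.tendsto_atTop.eventually (eventually_ge_atTop m)
      obtain ⟨j, h1, h2, h3⟩ := (hev1.and (hev2.and hev3)).exists
      try simp only [Function.comp_apply] at h1
      have h4 : g m (x (ψ j)) ≤ g (ψ j) (x (ψ j)) := hgmono m (ψ j) h3 _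
      have h5 : g (ψ j) (x (ψ j)) ≤ g0 y + ε (ψ j) := key (ψ j) y hy
      linarith
    -- g m xbar → g0 xbar
    have hlim : Tendsto (fun m => g m xbar) atTop (nhds (g0 xbar)) := by
      have hterm : ∀ i ∈ I, Tendsto (fun m => γ i * f (|xbar i| / σ m)) atTop
          (nhds (γ i * (if xbar i ≠ 0 then (1:ℝ) else 0))) := by
        intro i _
        by_cases h : xbar i = 0
        · simpa [h, hf0] using
            (tendsto_const_nhds : Tendsto (fun _ : ℕ => (0:ℝ)) atTop (nhds 0))
        · rw [if_pos h]
          have habs : 0 < |xbar i| := abs_pos.2 h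
          have hσin : Tendsto σ atTop (nhdsWithin 0 (Set.Ioi 0)) :=
            tendsto_nhdsWithin_of_tendsto_nhds_of_eventually_within _ hσlim
              (Eventually.of_forall fun k => hσpos k)
          have hinv : Tendsto (fun m => (σ m)⁻¹) atTop atTop :=
            tendsto_inv_nhdsGT_zero.comp hσin
          have hdiv : Tendsto (fun m => |xbar i| / σ m) atTop atTop := by
            simp only [div_eq_mul_inv]
            exact hinv.const_mul_atTop habs
          exact (hflim.comp hdiv).const_mul (γ i)
      have hsum := tendsto_finset_sum I hterm
      have := hsum.const_add (R xbar + lam * J xbar)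
      rw [hg0def xbar]
      have he : (fun m => g m xbar)
          = fun m => R xbar + lam * J xbar + ∑ i ∈ I, γ i * f (|xbar i| / σ m) := by
        funext m; rw [hgdef]
      rw [he]
      exact this
    have final : ∀ y ∈ K, g0 xbar ≤ g0 y := fun y hy =>
      le_of_tendsto hlim (Eventually.of_forall fun m => step m y hy)
    -- conclude
    refine le_antisymm ?_ (iInf_le _ _)
    refine le_iInf fun y => ?_
    rw [hΦ₀' xbar, if_pos hxbarK, hΦ₀' y]
    by_cases hy : y ∈ K
    · rw [if_pos hy]; exact_mod_cast final y hy
    · rw [if_neg hy]; exact le_top
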